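/- Let φ_i, φ be proper lower semi-continuous convex functions on ℝⁿ such that the Legendre transforms satisfy φ_i* ↓ φ* pointwise (decreasing in i, converging to φ*). Then φ_i ↑ φ pointwise. -/

import Mathlib

open Filter Topology

/-- `φ : ℝⁿ → (-∞,∞]` is a proper lower semi-continuous convex function. -/
def IsLscConvexFn {n : ℕ} (φ : EuclideanSpace ℝ (Fin n) → EReal) : Prop :=
  LowerSemicontinuous φ ∧ (∀ x, φ x ≠ ⊥) ∧ (∃ x, φ x ≠ ⊤) ∧
    ∀ x y : EuclideanSpace ℝ (Fin n), ∀ a b : ℝ, 0 < a → 0 < b → a + b = 1 →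
      φ (a • x + b • y) ≤ (a : EReal) * φ x + (b : EReal) * φ y

/-- The Legendre transform. -/
noncomputable def legendre {n : ℕ} (φ : EuclideanSpace ℝ (Fin n) → EReal)
    (y : EuclideanSpace ℝ (Fin n)) : EReal :=
  ⨆ x : EuclideanSpace ℝ (Fin n), ((inner ℝ x y : ℝ) : EReal) - φ x

lemma sep_core {n : ℕ} {φ : EuclideanSpace ℝ (Fin n) → EReal} (hφ : IsLscConvexFn φ)
    {x : EuclideanSpace ℝ (Fin n)} {r : ℝ} (hr : (r : EReal) < φ x) :
    ∃ (v : EuclideanSpace ℝ (Fin n)) (s u : ℝ), 0 ≤ s ∧ (inner ℝ x v : ℝ) + r * s < u ∧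
      ∀ (x' : EuclideanSpace ℝ (Fin n)) (t : ℝ), φ x' ≤ (t : EReal) →
        u < (inner ℝ x' v : ℝ) + t * s := by
  obtain ⟨hlsc, hbot, ⟨x0, hx0⟩, hcvx⟩ := hφ
  set S : Set (EuclideanSpace ℝ (Fin n) × ℝ) := {p | φ p.1 ≤ (p.2 : EReal)} with hS
  have hSclosed : IsClosed S := by
    rw [← isOpen_compl_iff, isOpen_iff_mem_nhds]
    rintro ⟨z, t⟩ hz
    simp only [Set.mem_compl_iff, hS, Set.mem_setOf_eq, not_le] at hz
    obtain ⟨c, hc1, hc2⟩ := EReal.exists_between_coe_real hz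
    have h1 : ∀ᶠ x' in 𝓝 z, (c : EReal) < φ x' := hlsc z _ hc2
    have h2 : Set.Iio c ∈ 𝓝 t := Iio_mem_nhds (by exact_mod_cast hc1)
    rw [nhds_prod_eq]
    filter_upwards [Filter.prod_mem_prod h1 h2] with p hp
    simp only [Set.mem_compl_iff, hS, Set.mem_setOf_eq, not_le]
    exact lt_trans (by exact_mod_cast hp.2) hp.1
  have hSconvex : Convex ℝ S := by
    rintro ⟨x1, t1⟩ h1 ⟨x2, t2⟩ h2 a b ha hb hab
    simp only [hS, Set.mem_setOf_eq] at h1 h2 ⊢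
    rcases eq_or_lt_of_le ha with ha0 | ha0
    · have hb1 : b = 1 := by linarith
      simp [← ha0, hb1] at *; simpa using h2
    rcases eq_or_lt_of_le hb with hb0 | hb0
    · have ha1 : a = 1 := by linarith
      simp [← hb0, ha1] at *; simpa using h1
    calc φ (a • x1 + b • x2) ≤ (a : EReal) * φ x1 + (b : EReal) * φ x2 :=
          hcvx x1 x2 a b ha0 hb0 hab
      _ ≤ (a : EReal) * (t1 : EReal) + (b : EReal) * (t2 : EReal) := by
          have hA := mul_le_mul_of_nonneg_left h1 (EReal.coe_nonneg.2 ha)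
          have hB := mul_le_mul_of_nonneg_left h2 (EReal.coe_nonneg.2 hb)
          exact add_le_add hA hB
      _ = ((a * t1 + b * t2 : ℝ) : EReal) := by push_cast; ring_nf
  have hxS : (x, r) ∉ S := by
    simp only [hS, Set.mem_setOf_eq, not_le]; exact hr
  obtain ⟨f, u, hfu, hfS⟩ := geometric_hahn_banach_point_closed hSconvex hSclosed hxS
  set s : ℝ := f ((0 : EuclideanSpace ℝ (Fin n)), (1 : ℝ)) with hs
  have hdec : ∀ p : EuclideanSpace ℝ (Fin n) × ℝ, f p = f (p.1, 0) + p.2 * s := by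
    intro p
    have hp : p = (p.1, (0 : ℝ)) + p.2 • ((0 : EuclideanSpace ℝ (Fin n)), (1 : ℝ)) := by
      ext <;> simp
    rw [hs]
    conv_lhs => rw [hp]
    rw [map_add, map_smul, smul_eq_mul]
  set g : EuclideanSpace ℝ (Fin n) →L[ℝ] ℝ := f.comp (ContinuousLinearMap.inl ℝ (EuclideanSpace ℝ (Fin n)) ℝ) with hg
  set v : EuclideanSpace ℝ (Fin n) := (InnerProductSpace.toDual ℝ (EuclideanSpace ℝ (Fin n))).symm g with hv
  have hgv : ∀ x' : EuclideanSpace ℝ (Fin n), (inner ℝ x' v : ℝ) = f (x', 0) := by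
    intro x'
    rw [real_inner_comm, hv, InnerProductSpace.toDual_symm_apply]
    rfl
  have ht0 : φ x0 = ((φ x0).toReal : EReal) := (EReal.coe_toReal hx0 (hbot x0)).symm
  have hs0 : 0 ≤ s := by
    by_contra hneg
    push_neg at hneg
    set t0 : ℝ := (φ x0).toReal
    set t : ℝ := max t0 ((u - f (x0, 0)) / s) with hts
    have hmem : (x0, t) ∈ S := by
      simp only [hS, Set.mem_setOf_eq]
      rw [ht0]
      exact_mod_cast le_max_left _ _
    have h2 := hfS _ hmem
    rw [hdec (x0, t)] at h2
    have hts' : (u - f (x0, 0)) / s ≤ t := le_max_right _ _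
    have : t * s ≤ u - f (x0, 0) := by
      rw [div_le_iff_of_neg hneg] at hts'
      linarith [hts']
    linarith
  refine ⟨v, s, u, hs0, ?_, ?_⟩
  · have h1 := hfu
    rw [hdec (x, r)] at h1
    rw [hgv]
    exact h1
  · intro x' t ht
    have h1 := hfS (x', t) ht
    rw [hdec (x', t)] at h1
    rw [hgv]
    exact h1

lemma my_sub_sub_cancel (a : ℝ) (x : EReal) : (a : EReal) - ((a : EReal) - x) = x := by
  induction x using EReal.rec with
  | bot => simp
  | coe b => norm_cast; ring_nf
  | top => simp

lemma legendre_mono {n : ℕ} {φ ψ : EuclideanSpace ℝ (Fin n) → EReal}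
    (h : ∀ x, φ x ≤ ψ x) (y : EuclideanSpace ℝ (Fin n)) : legendre ψ y ≤ legendre φ y :=
  iSup_mono fun x => EReal.sub_le_sub le_rfl (h x)

lemma legendre_le_coe {n : ℕ} {φ : EuclideanSpace ℝ (Fin n) → EReal}
    (hbot : ∀ x, φ x ≠ ⊥) {y : EuclideanSpace ℝ (Fin n)} {c : ℝ}
    (h : ∀ (x' : EuclideanSpace ℝ (Fin n)) (b : ℝ), φ x' = (b : EReal) →
      (inner ℝ x' y : ℝ) - b ≤ c) : legendre φ y ≤ (c : EReal) := by
  refine iSup_le fun x' => ?_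
  by_cases htop : φ x' = ⊤
  · rw [htop]
    simp [sub_eq_add_neg]
  · have hb : φ x' = (((φ x').toReal : ℝ) : EReal) := (EReal.coe_toReal htop (hbot x')).symm
    rw [hb, ← EReal.coe_sub]
    exact_mod_cast h x' _ hb

lemma biconj_le {n : ℕ} {φ : EuclideanSpace ℝ (Fin n) → EReal}
    (_hbot : ∀ x, φ x ≠ ⊥) (x : EuclideanSpace ℝ (Fin n)) :
    legendre (legendre φ) x ≤ φ x := by
  refine iSup_le fun y => ?_
  have h1 : ((inner ℝ y x : ℝ) : EReal) - φ x ≤ legendre φ y := by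
    rw [real_inner_comm]
    exact le_iSup (fun x => ((inner ℝ x y : ℝ) : EReal) - φ x) x
  calc ((inner ℝ y x : ℝ) : EReal) - legendre φ y
      ≤ ((inner ℝ y x : ℝ) : EReal) - (((inner ℝ y x : ℝ) : EReal) - φ x) :=
        EReal.sub_le_sub le_rfl h1
    _ = φ x := my_sub_sub_cancel _ _

lemma coe_sub_iInf_le {ι : Type*} [Nonempty ι] (a : ℝ) (L : ι → EReal) :
    (a : EReal) - ⨅ i, L i ≤ ⨆ i, ((a : EReal) - L i) := by
  have h1 : (a : EReal) - (⨆ i, ((a : EReal) - L i)) ≤ ⨅ i, L i := by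
    refine le_iInf fun i => ?_
    calc (a : EReal) - (⨆ j, ((a : EReal) - L j))
        ≤ (a : EReal) - ((a : EReal) - L i) :=
          EReal.sub_le_sub le_rfl (le_iSup (fun j => (a : EReal) - L j) i)
      _ = L i := my_sub_sub_cancel _ _
  calc (a : EReal) - ⨅ i, L i
      ≤ (a : EReal) - ((a : EReal) - ⨆ i, ((a : EReal) - L i)) :=
        EReal.sub_le_sub le_rfl h1
    _ = _ := my_sub_sub_cancel _ _

lemma exists_dual_bound {n : ℕ} {φ : EuclideanSpace ℝ (Fin n) → EReal}
    (hφ : IsLscConvexFn φ) {x : EuclideanSpace ℝ (Fin n)} {r : ℝ} (hr : (r : EReal) < φ x) :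
    ∃ (y : EuclideanSpace ℝ (Fin n)) (c : ℝ),
      legendre φ y ≤ (c : EReal) ∧ r ≤ (inner ℝ y x : ℝ) - c := by
  obtain ⟨hlsc, hbot, ⟨x0, hx0⟩, hcvx⟩ := id hφ
  -- affine minorant
  have ht0 : φ x0 = (((φ x0).toReal : ℝ) : EReal) := (EReal.coe_toReal hx0 (hbot x0)).symm
  have hr0 : (((φ x0).toReal - 1 : ℝ) : EReal) < φ x0 := by
    rw [ht0]; exact_mod_cast sub_one_lt _
  obtain ⟨v0, s0, u0, hs0, h10, h20⟩ := sep_core hφ hr0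
  have hs0pos : 0 < s0 := by
    rcases hs0.lt_or_eq with h | h
    · exact h
    · exfalso
      have ha := h20 x0 ((φ x0).toReal) ht0.le
      rw [← h] at ha h10
      simp only [mul_zero, add_zero] at ha h10
      linarith
  set w0 : EuclideanSpace ℝ (Fin n) := (-(s0⁻¹)) • v0 with hw0
  set c0 : ℝ := -(u0 / s0) with hc0
  have hmin : ∀ (x' : EuclideanSpace ℝ (Fin n)) (b : ℝ), φ x' = (b : EReal) →
      (inner ℝ x' w0 : ℝ) - b ≤ c0 := by
    intro x' b hb
    have h3 := h20 x' b hb.le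
    have h4 : s0 * s0⁻¹ = 1 := mul_inv_cancel₀ hs0pos.ne'
    have h5 : (inner ℝ x' w0 : ℝ) = (-(s0⁻¹)) * (inner ℝ x' v0 : ℝ) := real_inner_smul_right x' v0 _
    have h7 := mul_lt_mul_of_pos_right h3 (inv_pos.2 hs0pos)
    have h8 : ((inner ℝ x' v0 : ℝ) + b * s0) * s0⁻¹ = (inner ℝ x' v0 : ℝ) * s0⁻¹ + b := by
      field_simp
    rw [h5, hc0, div_eq_mul_inv]
    linarith
  clear_value w0 c0
  -- main separation
  obtain ⟨v, s, u, hs, h1, h2⟩ := sep_core hφ hr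
  rcases hs.lt_or_eq with hspos | hszero
  · refine ⟨(-(s⁻¹)) • v, -(u / s), legendre_le_coe hbot ?_, ?_⟩
    · intro x' b hb
      have h3 := h2 x' b hb.le
      have h4 : s * s⁻¹ = 1 := mul_inv_cancel₀ hspos.ne'
      have h5 : (inner ℝ x' ((-(s⁻¹)) • v) : ℝ) = (-(s⁻¹)) * (inner ℝ x' v : ℝ) :=
        real_inner_smul_right x' v _
      have h7 := mul_lt_mul_of_pos_right h3 (inv_pos.2 hspos)
      have h8 : ((inner ℝ x' v : ℝ) + b * s) * s⁻¹ = (inner ℝ x' v : ℝ) * s⁻¹ + b := by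
        field_simp
      rw [h5, div_eq_mul_inv]
      linarith
    · have h4 : s * s⁻¹ = 1 := mul_inv_cancel₀ hspos.ne'
      have h5 : (inner ℝ ((-(s⁻¹)) • v) x : ℝ) = (-(s⁻¹)) * (inner ℝ v x : ℝ) :=
        real_inner_smul_left v x _
      have h6 : (inner ℝ v x : ℝ) = (inner ℝ x v : ℝ) := real_inner_comm x v
      have h7 := mul_lt_mul_of_pos_right h1 (inv_pos.2 hspos)
      have h8 : ((inner ℝ x v : ℝ) + r * s) * s⁻¹ = (inner ℝ x v : ℝ) * s⁻¹ + r := by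
        field_simp
      rw [h5, h6, div_eq_mul_inv]
      linarith
  · -- s = 0
    rw [← hszero] at h1 h2
    simp only [mul_zero, add_zero] at h1 h2
    set d : ℝ := u - (inner ℝ x v : ℝ) with hd
    have hdpos : 0 < d := by rw [hd]; linarith
    set M : ℝ := max 0 ((r - (inner ℝ w0 x : ℝ) + c0) / d) with hM
    have hM0 : 0 ≤ M := le_max_left _ _
    refine ⟨w0 - M • v, c0 - M * u, legendre_le_coe hbot ?_, ?_⟩
    · intro x' b hb
      have hmb := hmin x' b hb
      have hub : u < (inner ℝ x' v : ℝ) := h2 x' b hb.le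
      have h5 : (inner ℝ x' (w0 - M • v) : ℝ)
          = (inner ℝ x' w0 : ℝ) - M * (inner ℝ x' v : ℝ) := by
        rw [inner_sub_right, real_inner_smul_right]
      rw [h5]
      nlinarith
    · have hMd : r - (inner ℝ w0 x : ℝ) + c0 ≤ M * d := by
        have := le_max_right 0 ((r - (inner ℝ w0 x : ℝ) + c0) / d)
        rwa [div_le_iff₀ hdpos] at this
      have h5 : (inner ℝ (w0 - M • v) x : ℝ)
          = (inner ℝ w0 x : ℝ) - M * (inner ℝ v x : ℝ) := by
        rw [inner_sub_left, real_inner_smul_left]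
      have h6 : (inner ℝ v x : ℝ) = (inner ℝ x v : ℝ) := real_inner_comm x v
      rw [h5, h6]
      rw [hd] at hMd
      nlinarith

lemma biconj_ge {n : ℕ} {φ : EuclideanSpace ℝ (Fin n) → EReal}
    (hφ : IsLscConvexFn φ) (x : EuclideanSpace ℝ (Fin n)) :
    φ x ≤ legendre (legendre φ) x := by
  by_contra h
  push_neg at h
  obtain ⟨r, hr1, hr2⟩ := EReal.exists_between_coe_real h
  obtain ⟨y, c, hy, hrc⟩ := exists_dual_bound hφ hr2
  have hle : (r : EReal) ≤ legendre (legendre φ) x := by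
    calc (r : EReal) ≤ (((inner ℝ y x : ℝ) - c : ℝ) : EReal) := by exact_mod_cast hrc
      _ = ((inner ℝ y x : ℝ) : EReal) - (c : EReal) := EReal.coe_sub _ _
      _ ≤ ((inner ℝ y x : ℝ) : EReal) - legendre φ y := EReal.sub_le_sub le_rfl hy
      _ ≤ legendre (legendre φ) x :=
          le_iSup (fun y => ((inner ℝ y x : ℝ) : EReal) - legendre φ y) y
  exact absurd (lt_of_le_of_lt hle hr1) (lt_irrefl _)

lemma biconj_eq {n : ℕ} {φ : EuclideanSpace ℝ (Fin n) → EReal}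
    (hφ : IsLscConvexFn φ) (x : EuclideanSpace ℝ (Fin n)) :
    legendre (legendre φ) x = φ x :=
  le_antisymm (biconj_le hφ.2.1 x) (biconj_ge hφ x)

/-- If `φ_i* ↓ φ*` pointwise then `φ_i ↑ φ` pointwise. -/
theorem mono_conv_of_conjugate_mono_conv {n : ℕ}
    (φs : ℕ → EuclideanSpace ℝ (Fin n) → EReal)
    (φ : EuclideanSpace ℝ (Fin n) → EReal)
    (hφs : ∀ i, IsLscConvexFn (φs i)) (hφ : IsLscConvexFn φ)
    (hanti : ∀ y, Antitone fun i => legendre (φs i) y)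
    (hconv : ∀ y, Tendsto (fun i => legendre (φs i) y) atTop (nhds (legendre φ y))) :
    ∀ x, (Monotone fun i => φs i x) ∧
      Tendsto (fun i => φs i x) atTop (nhds (φ x)) := by
  intro x
  have hLeq : ∀ y, legendre φ y = ⨅ i, legendre (φs i) y := fun y =>
    tendsto_nhds_unique (hconv y) (tendsto_atTop_iInf (hanti y))
  have hLle : ∀ i y, legendre φ y ≤ legendre (φs i) y := by
    intro i y
    rw [hLeq y]
    exact iInf_le _ i
  have hle : ∀ i, φs i x ≤ φ x := by
    intro i
    rw [← biconj_eq (hφs i) x, ← biconj_eq hφ x]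
    exact iSup_mono fun y => EReal.sub_le_sub le_rfl (hLle i y)
  have hmono : Monotone fun i => φs i x := by
    intro i j hij
    simp only
    rw [← biconj_eq (hφs i) x, ← biconj_eq (hφs j) x]
    exact iSup_mono fun y => EReal.sub_le_sub le_rfl (hanti y hij)
  refine ⟨hmono, ?_⟩
  have hsup : (⨆ i, φs i x) = φ x := by
    refine le_antisymm (iSup_le hle) ?_
    rw [← biconj_eq hφ x]
    refine iSup_le fun y => ?_
    calc ((inner ℝ y x : ℝ) : EReal) - legendre φ y
        ≤ ⨆ i, (((inner ℝ y x : ℝ) : EReal) - legendre (φs i) y) := by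
          rw [hLeq y]
          exact coe_sub_iInf_le _ _
      _ ≤ ⨆ i, φs i x := by
          refine iSup_mono fun i => ?_
          rw [← biconj_eq (hφs i) x]
          exact le_iSup (fun y => ((inner ℝ y x : ℝ) : EReal) - legendre (φs i) y) y
  rw [← hsup]
  exact tendsto_atTop_iSup hmono
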